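/- With the stable-1/2 bridge density f_{tT}(y;z) as above, the first moment is ∫₀^z y f_{tT}(y;z) dy = (t/T) z; in particular a stable-1/2 bridge from 0 to z has expected value (t/T)z at time t. -/

import Mathlib

open MeasureTheory Real Set

/-- Marginal density at time `t` of the stable-1/2 bridge from `0` at time `0` to `z` at
time `T`, with activity parameter `c`. -/
noncomputable def stableBridgeDen (c T t z y : ℝ) : ℝ :=
  (1 / Real.sqrt (2 * Real.pi)) * (c * t * (T - t) / T) *
    (Real.exp (-(c ^ 2 * (T * y - t * z) ^ 2) / (2 * y * z * (z - y))) /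
      (y - y ^ 2 / z) ^ ((3 : ℝ) / 2))

lemma glasser (a b : ℝ) (ha : 0 < a) (hb : 0 < b) :
    ∫ s in Ioi (0:ℝ), Real.exp (-(a*s - b/s)^2) = Real.sqrt π / (2*a) := by
  set v : ℝ → ℝ := fun s => a*s - b/s with hv
  set e : ℝ → ℝ := fun s => Real.exp (-(a*s - b/s)^2) with he
  -- image of v
  have himg : v '' Ioi 0 = univ := by
    apply eq_univ_of_forall
    intro y
    set r := Real.sqrt (y^2 + 4*a*b) with hr
    have hr2 : r^2 = y^2 + 4*a*b := Real.sq_sqrt (by nlinarith)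
    have hrpos : 0 ≤ r := Real.sqrt_nonneg _
    have hs : 0 < (y + r)/(2*a) := by
      apply div_pos _ (by linarith)
      nlinarith
    refine ⟨(y + r)/(2*a), hs, ?_⟩
    have hne : (y + r)/(2*a) ≠ 0 := ne_of_gt hs
    show a * ((y + r)/(2*a)) - b / ((y + r)/(2*a)) = y
    have hyr : 0 < y + r := by nlinarith
    field_simp
    linear_combination hr2
  -- derivative
  have hderiv : ∀ s ∈ Ioi (0:ℝ), HasDerivWithinAt v (a + b/s^2) (Ioi 0) s := by
    intro s hs
    have hs0 : (s:ℝ) ≠ 0 := ne_of_gt hs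
    have h1 : HasDerivAt v (a * 1 - b * (-(s^2)⁻¹)) s := by
      exact ((hasDerivAt_id s).const_mul a).sub ((hasDerivAt_inv hs0).const_mul b)
    have h2 : a * 1 - b * (-(s^2)⁻¹) = a + b/s^2 := by field_simp; ring
    exact (h2 ▸ h1).hasDerivWithinAt
  -- injectivity
  have hinj : InjOn v (Ioi 0) := by
    apply StrictMonoOn.injOn
    intro x hx y hy hxy
    have hx0 : (0:ℝ) < x := hx
    have hy0 : (0:ℝ) < y := hy
    have h1 : a*x < a*y := by nlinarith
    have h2 : b/y < b/x := div_lt_div_of_pos_left hb hx0 hxy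
    simp only [hv]
    linarith
  have key := MeasureTheory.integral_image_eq_integral_abs_deriv_smul (measurableSet_Ioi)
    hderiv hinj (fun x => Real.exp (-x^2))
  rw [himg] at key
  have hgauss : ∫ x : ℝ, Real.exp (-x^2) = Real.sqrt π := by
    have := integral_gaussian 1
    simpa using this
  rw [MeasureTheory.setIntegral_univ, hgauss] at key
  simp only [smul_eq_mul] at key
  -- integrability of the full integrand
  have hiff := MeasureTheory.integrableOn_image_iff_integrableOn_abs_deriv_smul
    (measurableSet_Ioi (a := (0:ℝ))) hderiv hinj (fun x => Real.exp (-x^2))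
  rw [himg] at hiff
  have hgaussint : IntegrableOn (fun x => Real.exp (-x^2)) univ := by
    rw [integrableOn_univ]
    have := integrable_exp_neg_mul_sq (one_pos (α := ℝ))
    simpa using this
  have habs : IntegrableOn (fun s => |a + b/s^2| * Real.exp (-(v s)^2)) (Ioi 0) := by
    have := hiff.mp hgaussint
    simpa [smul_eq_mul] using this
  have hmg1 : Measurable fun s : ℝ => (b/s^2) * Real.exp (-(v s)^2) := by
    apply Measurable.mul
    · exact measurable_const.div ((measurable_id.pow_const 2))
    · apply Measurable.exp
      apply Measurable.neg
      apply Measurable.pow _ measurable_const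
      exact (measurable_const.mul measurable_id).sub (measurable_const.div measurable_id)
  have hmg2 : Measurable fun s : ℝ => a * Real.exp (-(v s)^2) := by
    apply Measurable.mul measurable_const
    apply Measurable.exp
    apply Measurable.neg
    apply Measurable.pow _ measurable_const
    exact (measurable_const.mul measurable_id).sub (measurable_const.div measurable_id)
  have hg1int : IntegrableOn (fun s => (b/s^2) * Real.exp (-(v s)^2)) (Ioi 0) := by
    apply habs.integrable.mono hmg1.aestronglyMeasurable
    rw [ae_restrict_iff' measurableSet_Ioi]
    filter_upwards with s hs
    have hs0 : (0:ℝ) < s := hs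
    have hs2 : (0:ℝ) < s^2 := pow_pos hs0 2
    have h1 : (0:ℝ) ≤ b/s^2 := le_of_lt (div_pos hb hs2)
    have h2 : (0:ℝ) < Real.exp (-(v s)^2) := Real.exp_pos _
    rw [Real.norm_eq_abs, Real.norm_eq_abs, abs_of_nonneg (by positivity),
      abs_of_nonneg (by positivity)]
    have : b/s^2 ≤ |a + b/s^2| := by
      rw [abs_of_pos (by positivity)]; linarith
    nlinarith [this, h2.le]
  have hg2int : IntegrableOn (fun s => a * Real.exp (-(v s)^2)) (Ioi 0) := by
    apply habs.integrable.mono hmg2.aestronglyMeasurable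
    rw [ae_restrict_iff' measurableSet_Ioi]
    filter_upwards with s hs
    have hs0 : (0:ℝ) < s := hs
    have hs2 : (0:ℝ) < s^2 := pow_pos hs0 2
    have h2 : (0:ℝ) < Real.exp (-(v s)^2) := Real.exp_pos _
    rw [Real.norm_eq_abs, Real.norm_eq_abs, abs_of_nonneg (by positivity),
      abs_of_nonneg (by positivity)]
    have : a ≤ |a + b/s^2| := by
      rw [abs_of_pos (by positivity)]
      have : (0:ℝ) ≤ b/s^2 := le_of_lt (div_pos hb hs2)
      linarith
    nlinarith [this, h2.le]
  -- split the integral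
  have hsplit : ∫ s in Ioi (0:ℝ), |a + b/s^2| * Real.exp (-(v s)^2)
      = (∫ s in Ioi (0:ℝ), a * Real.exp (-(v s)^2))
        + ∫ s in Ioi (0:ℝ), (b/s^2) * Real.exp (-(v s)^2) := by
    rw [← MeasureTheory.integral_add hg2int.integrable hg1int.integrable]
    apply MeasureTheory.setIntegral_congr_fun measurableSet_Ioi
    intro s hs
    have hs0 : (0:ℝ) < s := hs
    have hs2 : (0:ℝ) < s^2 := pow_pos hs0 2
    have h3 : (0:ℝ) < a + b/s^2 := by positivity
    dsimp only
    rw [abs_of_pos h3]; ring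
  -- second substitution s = b/(a w)
  have hI2 : ∫ s in Ioi (0:ℝ), Real.exp (-(v s)^2)
      = ∫ w in Ioi (0:ℝ), (b/(a*w^2)) * Real.exp (-(v w)^2) := by
    have himg2 : (fun w : ℝ => b/(a*w)) '' Ioi 0 = Ioi 0 := by
      ext x
      constructor
      · rintro ⟨w, hw, rfl⟩
        have hw0 : (0:ℝ) < w := hw
        exact mem_Ioi.mpr (div_pos hb (mul_pos ha hw0))
      · intro hx
        have hx0 : (0:ℝ) < x := hx
        refine ⟨b/(a*x), div_pos hb (by positivity), ?_⟩
        field_simp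
    have hderiv2 : ∀ w ∈ Ioi (0:ℝ), HasDerivWithinAt (fun w : ℝ => b/(a*w))
        (-(b/(a*w^2))) (Ioi 0) w := by
      intro w hw
      have hw0 : (w:ℝ) ≠ 0 := ne_of_gt hw
      have h1 : HasDerivAt (fun w : ℝ => (b/a) * w⁻¹) ((b/a) * (-(w^2)⁻¹)) w :=
        (hasDerivAt_inv hw0).const_mul (b/a)
      have h2 : (fun w : ℝ => (b/a) * w⁻¹) = fun w : ℝ => b/(a*w) := by
        funext w; field_simp
      have h3 : (b/a) * (-(w^2)⁻¹) = -(b/(a*w^2)) := by field_simp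
      rw [h2, h3] at h1
      exact h1.hasDerivWithinAt
    have hinj2 : InjOn (fun w : ℝ => b/(a*w)) (Ioi 0) := by
      intro x hx y hy hxy
      simp only at hxy
      have hx0 : (0:ℝ) < x := hx
      have hy0 : (0:ℝ) < y := hy
      rw [div_eq_div_iff (by positivity) (by positivity)] at hxy
      exact mul_left_cancel₀ (mul_ne_zero hb.ne' ha.ne') (by linear_combination -hxy)
    have key2 := MeasureTheory.integral_image_eq_integral_abs_deriv_smul (measurableSet_Ioi)
      hderiv2 hinj2 (fun s => Real.exp (-(v s)^2))
    rw [himg2] at key2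
    rw [key2]
    apply MeasureTheory.setIntegral_congr_fun measurableSet_Ioi
    intro w hw
    have hw0 : (w:ℝ) ≠ 0 := ne_of_gt hw
    have h1 : |(-(b/(a*w^2)))| = b/(a*w^2) := by
      rw [abs_neg, abs_of_pos (by positivity)]
    have h2 : v (b/(a*w)) = -(v w) := by
      simp only [hv]
      field_simp
      ring
    dsimp only
    rw [smul_eq_mul, h1, h2]
    ring_nf
  -- put it together
  have e1 : ∫ s in Ioi (0:ℝ), a * Real.exp (-(v s)^2)
      = a * ∫ s in Ioi (0:ℝ), Real.exp (-(v s)^2) := by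
    rw [MeasureTheory.integral_const_mul]
  have e2 : ∫ w in Ioi (0:ℝ), (b/(a*w^2)) * Real.exp (-(v w)^2)
      = a⁻¹ * ∫ w in Ioi (0:ℝ), (b/w^2) * Real.exp (-(v w)^2) := by
    rw [← MeasureTheory.integral_const_mul]
    apply MeasureTheory.setIntegral_congr_fun measurableSet_Ioi
    intro w hw
    dsimp only
    rw [div_mul_eq_div_div_swap]
    ring
  have e3 : ∫ w in Ioi (0:ℝ), (b/w^2) * Real.exp (-(v w)^2)
      = a * ∫ s in Ioi (0:ℝ), Real.exp (-(v s)^2) := by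
    have ha' : a ≠ 0 := ne_of_gt ha
    have h := hI2
    rw [e2] at h
    rw [h, ← mul_assoc, mul_inv_cancel₀ ha', one_mul]
  have hfinal : Real.sqrt π = 2 * a * ∫ s in Ioi (0:ℝ), Real.exp (-(v s)^2) := by
    rw [key, hsplit, e1, e3]; ring
  have : ∫ s in Ioi (0:ℝ), Real.exp (-(v s)^2) = Real.sqrt π / (2*a) := by
    field_simp at hfinal ⊢
    linarith
  simpa [hv] using this


lemma besselhalf (α β : ℝ) (hα : 0 < α) (hβ : 0 < β) :
    ∫ x in Ioi (0:ℝ), Real.exp (-(α*x) - β/x) / Real.sqrt x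
      = Real.sqrt (π/α) * Real.exp (-2 * Real.sqrt (α*β)) := by
  have hsa : (0:ℝ) < Real.sqrt α := Real.sqrt_pos.mpr hα
  have hsb : (0:ℝ) < Real.sqrt β := Real.sqrt_pos.mpr hβ
  -- substitution x = s^2
  have himg : (fun s : ℝ => s^2) '' Ioi 0 = Ioi 0 := by
    ext x
    constructor
    · rintro ⟨s, hs, rfl⟩
      exact mem_Ioi.mpr (pow_pos hs 2)
    · intro hx
      have hx0 : (0:ℝ) < x := hx
      exact ⟨Real.sqrt x, Real.sqrt_pos.mpr hx0, Real.sq_sqrt hx0.le⟩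
  have hderiv : ∀ s ∈ Ioi (0:ℝ), HasDerivWithinAt (fun s : ℝ => s^2) (2*s) (Ioi 0) s := by
    intro s hs
    simpa using (hasDerivAt_pow 2 s).hasDerivWithinAt
  have hinj : InjOn (fun s : ℝ => s^2) (Ioi 0) := by
    intro x hx y hy hxy
    have hx0 : (0:ℝ) < x := hx
    have hy0 : (0:ℝ) < y := hy
    simp only at hxy
    nlinarith
  have key := MeasureTheory.integral_image_eq_integral_abs_deriv_smul (measurableSet_Ioi)
    hderiv hinj (fun x => Real.exp (-(α*x) - β/x) / Real.sqrt x)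
  rw [himg] at key
  rw [key]
  have hcongr : ∀ s ∈ Ioi (0:ℝ),
      |2*s| • (Real.exp (-(α*s^2) - β/s^2) / Real.sqrt (s^2))
      = (2 * Real.exp (-2 * Real.sqrt (α*β)))
          * Real.exp (-(Real.sqrt α * s - Real.sqrt β / s)^2) := by
    intro s hs
    have hs0 : (0:ℝ) < s := hs
    have hss : Real.sqrt (s^2) = s := Real.sqrt_sq hs0.le
    have hexp : -(α*s^2) - β/s^2
        = -2 * Real.sqrt (α*β) + (-(Real.sqrt α * s - Real.sqrt β / s)^2) := by
      have h1 : Real.sqrt α * Real.sqrt β = Real.sqrt (α*β) := (Real.sqrt_mul hα.le β).symm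
      have h2 : (Real.sqrt α)^2 = α := Real.sq_sqrt hα.le
      have h3 : (Real.sqrt β)^2 = β := Real.sq_sqrt hβ.le
      have hsne : s ≠ 0 := ne_of_gt hs0
      have hA : α * s^2 = (Real.sqrt α * s)^2 := by rw [mul_pow, h2]
      have hB : β / s^2 = (Real.sqrt β / s)^2 := by rw [div_pow, h3]
      have hAB : (Real.sqrt α * s) * (Real.sqrt β / s) = Real.sqrt (α*β) := by
        have h4 : (Real.sqrt α * s) * (Real.sqrt β / s)
            = (Real.sqrt α * Real.sqrt β) * (s / s) := by ring
        rw [h4, div_self hsne, mul_one, h1]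
      rw [hA, hB, ← hAB]
      ring
    rw [smul_eq_mul, hss, abs_of_pos (by positivity), hexp, Real.exp_add]
    have hsne : s ≠ 0 := ne_of_gt hs0
    field_simp
  rw [MeasureTheory.setIntegral_congr_fun measurableSet_Ioi hcongr,
    MeasureTheory.integral_const_mul, glasser (Real.sqrt α) (Real.sqrt β) hsa hsb]
  rw [Real.sqrt_div Real.pi_nonneg α]
  have hane : Real.sqrt α ≠ 0 := ne_of_gt hsa
  field_simp

/-- First moment of the stable-1/2 bridge marginal: the expected value of the bridge
at time `t` is `(t/T) z`. -/
theorem stable_half_bridge_first_moment (c T t z : ℝ)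
    (hc : 0 < c) (ht : 0 < t) (htT : t < T) (hz : 0 < z) :
    (∫ y in Set.Ioo (0 : ℝ) z, y * stableBridgeDen c T t z y) = (t / T) * z := by
  have hT : 0 < T := ht.trans htT
  have hTt : 0 < T - t := by linarith
  set α : ℝ := c^2*(T-t)^2/(2*z) with hα
  set β : ℝ := c^2*t^2/(2*z) with hβ
  set γ : ℝ := c^2*t*(T-t)/z with hγ
  have hα0 : 0 < α := by positivity
  have hβ0 : 0 < β := by positivity
  set K : ℝ := (1 / Real.sqrt (2 * Real.pi)) * (c * t * (T - t) / T) with hK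
  set φ : ℝ → ℝ := fun u => z*u/(1+u) with hφ
  -- image
  have himg : φ '' Ioi 0 = Ioo 0 z := by
    ext y
    constructor
    · rintro ⟨u, hu, rfl⟩
      have hu0 : (0:ℝ) < u := hu
      have h1u : (0:ℝ) < 1 + u := by linarith
      constructor
      · exact div_pos (by positivity) h1u
      · rw [div_lt_iff₀ h1u]
        nlinarith
    · rintro ⟨hy0, hyz⟩
      have hzy : (0:ℝ) < z - y := by linarith
      refine ⟨y/(z-y), div_pos hy0 hzy, ?_⟩
      show z*(y/(z-y))/(1+y/(z-y)) = y
      rw [div_eq_iff]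
      · field_simp
        ring
      · have : (0:ℝ) < 1 + y/(z-y) := by positivity
        exact ne_of_gt this
  -- derivative
  have hderiv : ∀ u ∈ Ioi (0:ℝ), HasDerivWithinAt φ (z/(1+u)^2) (Ioi 0) u := by
    intro u hu
    have hu0 : (0:ℝ) < u := hu
    have h1u : (0:ℝ) < 1 + u := by linarith
    have h1 : HasDerivAt (fun u : ℝ => z*u/(1+u))
        ((z*1*(1+u) - z*u*1)/(1+u)^2) u :=
      ((hasDerivAt_id u).const_mul z).div ((hasDerivAt_id u).const_add 1) (ne_of_gt h1u)
    have h2 : (z*1*(1+u) - z*u*1)/(1+u)^2 = z/(1+u)^2 := by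
      congr 1; ring
    exact (h2 ▸ h1).hasDerivWithinAt
  -- injectivity
  have hinj : InjOn φ (Ioi 0) := by
    apply StrictMonoOn.injOn
    intro x hx y hy hxy
    have hx0 : (0:ℝ) < x := hx
    have hy0 : (0:ℝ) < y := hy
    show z*x/(1+x) < z*y/(1+y)
    rw [div_lt_div_iff₀ (by linarith) (by linarith)]
    nlinarith
  have key := MeasureTheory.integral_image_eq_integral_abs_deriv_smul (measurableSet_Ioi)
    hderiv hinj (fun y => y * stableBridgeDen c T t z y)
  rw [himg] at key
  rw [key]
  -- pointwise identity
  have hcongr : ∀ u ∈ Ioi (0:ℝ),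
      |z/(1+u)^2| • (φ u * stableBridgeDen c T t z (φ u))
      = (K * Real.exp γ * Real.sqrt z) * (Real.exp (-(α*u) - β/u) / Real.sqrt u) := by
    intro u hu
    have hu0 : (0:ℝ) < u := hu
    have h1u : (0:ℝ) < 1 + u := by linarith
    have hy : φ u = z*u/(1+u) := rfl
    have hy0 : (0:ℝ) < φ u := by rw [hy]; positivity
    have hyz : φ u < z := by
      rw [hy, div_lt_iff₀ h1u]; nlinarith
    have hm : φ u - (φ u)^2/z = z*u/(1+u)^2 := by
      rw [hy]; field_simp; ring
    have hm0 : (0:ℝ) < z*u/(1+u)^2 := by positivity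
    have h32 : (z*u/(1+u)^2) ^ ((3:ℝ)/2)
        = (z*u/(1+u)^2) * (Real.sqrt z * Real.sqrt u / (1+u)) := by
      rw [show ((3:ℝ)/2) = 1 + 1/2 by norm_num, Real.rpow_add hm0, Real.rpow_one,
        ← Real.sqrt_eq_rpow]
      congr 1
      rw [Real.sqrt_div (by positivity) ((1+u)^2), Real.sqrt_mul hz.le,
        Real.sqrt_sq h1u.le]
    have hEexp : -(c ^ 2 * (T * φ u - t * z) ^ 2) / (2 * φ u * z * (z - φ u))
        = (-(α*u) - β/u) + γ := by
      rw [hy, hα, hβ, hγ]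
      have h1 : z - z*u/(1+u) = z/(1+u) := by field_simp; ring
      rw [h1]
      field_simp
      ring
    rw [smul_eq_mul, abs_of_pos (show (0:ℝ) < z/(1+u)^2 by positivity)]
    simp only [stableBridgeDen]
    rw [hm, h32, hEexp, Real.exp_add, hy]
    set sz := Real.sqrt z with hsz
    set su := Real.sqrt u with hsu
    have hsz0 : 0 < sz := Real.sqrt_pos.mpr hz
    have hsu0 : 0 < su := Real.sqrt_pos.mpr hu0
    have hsz2 : sz^2 = z := Real.sq_sqrt hz.le
    have hsu2 : su^2 = u := Real.sq_sqrt hu0.le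
    clear_value sz su α β γ K
    generalize Real.exp (-(α*u) - β/u) = A
    generalize Real.exp γ = B
    rw [← hsz2, ← hsu2] at *
    have h1u' : (1:ℝ) + su^2 ≠ 0 := by positivity
    have hszne : sz ≠ 0 := ne_of_gt hsz0
    have hsune : su ≠ 0 := ne_of_gt hsu0
    have h2pine : Real.sqrt (2*π) ≠ 0 := ne_of_gt (Real.sqrt_pos.mpr (by positivity))
    rw [hK]
    field_simp
  rw [MeasureTheory.setIntegral_congr_fun measurableSet_Ioi hcongr,
    MeasureTheory.integral_const_mul, besselhalf α β hα0 hβ0]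
  -- final arithmetic
  have hsab : Real.sqrt (α*β) = c^2*t*(T-t)/(2*z) := by
    rw [show α*β = (c^2*t*(T-t)/(2*z))^2 by rw [hα, hβ]; ring]
    exact Real.sqrt_sq (by positivity)
  have hexp : Real.exp γ * Real.exp (-2 * Real.sqrt (α*β)) = 1 := by
    rw [← Real.exp_add, hsab, hγ]
    rw [show c^2*t*(T-t)/z + -2 * (c^2*t*(T-t)/(2*z)) = 0 by field_simp; ring]
    exact Real.exp_zero
  have hpa : Real.sqrt (π/α) = Real.sqrt (2*π) * Real.sqrt z / (c*(T-t)) := by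
    rw [show π/α = (Real.sqrt (2*π) * Real.sqrt z / (c*(T-t)))^2 by
      rw [div_pow, mul_pow, Real.sq_sqrt (by positivity), Real.sq_sqrt hz.le, hα]
      field_simp]
    exact Real.sqrt_sq (by positivity)
  rw [hpa, hK]
  have h2π : (0:ℝ) < Real.sqrt (2*π) := Real.sqrt_pos.mpr (by positivity)
  have hsz2 : Real.sqrt z * Real.sqrt z = z := Real.mul_self_sqrt hz.le
  calc (1 / Real.sqrt (2 * π) * (c * t * (T - t) / T) * Real.exp γ * Real.sqrt z) *
        (Real.sqrt (2*π) * Real.sqrt z / (c*(T-t)) * Real.exp (-2 * Real.sqrt (α*β)))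
      = (Real.exp γ * Real.exp (-2 * Real.sqrt (α*β))) *
        ((Real.sqrt (2*π) / Real.sqrt (2*π)) * (Real.sqrt z * Real.sqrt z) *
          ((c * t * (T - t) / T) / (c*(T-t)))) := by ring
    _ = (t / T) * z := by
        rw [hexp, div_self (ne_of_gt h2π), hsz2, one_mul, one_mul]
        have hc' : c ≠ 0 := ne_of_gt hc
        have hT' : T ≠ 0 := ne_of_gt hT
        have hTt' : T - t ≠ 0 := ne_of_gt hTt
        field_simp
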